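/- arXiv:1309.7236 — 2 statements merged into one kernel-verified Lean document; each statement's English description precedes it below -/
import Mathlib

section
/- Let Z be a principal ideal domain (e.g. ℤ or F[t]) with fraction field Q, and let T be a set of primes of Z. Then every matrix A ∈ GL_n(Q) can be written as a product A = B·C with B ∈ GL_n(Z[T^{-1}]) and C ∈ GL_n(Z[(P∖T)^{-1}]), where P is the set of all primes of Z. Moreover, if A ∈ SL_n(Q), then B and C can be chosen in SL_n(Z[T^{-1}]) and SL_n(Z[(P∖T)^{-1}]) respectively. -/
open Matrix in
private lemma matrix_snf_aux {R : Type*} [CommRing R] [IsDomain R] [IsPrincipalIdealRing R] {n : ℕ}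
    (A : Matrix (Fin n) (Fin n) R) (hA : A.det ≠ 0) :
    ∃ (L Rm : Matrix (Fin n) (Fin n) R) (w : Fin n → R),
      IsUnit L.det ∧ IsUnit Rm.det ∧ A = L * Matrix.diagonal w * Rm := by
  classical
  set b := Pi.basisFun R (Fin n) with hb
  set φ : (Fin n → R) →ₗ[R] (Fin n → R) := Matrix.toLin b b A with hφ
  have hφ_apply : ∀ v, φ v = A.mulVec v := by
    intro v
    rw [hφ, Matrix.toLin_eq_toLin', Matrix.toLin'_apply]
  have hinj : Function.Injective φ := by
    rw [injective_iff_map_eq_zero]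
    intro v hv
    by_contra hv0
    have : ∃ v ≠ 0, A.mulVec v = 0 := ⟨v, hv0, by rw [← hφ_apply]; exact hv⟩
    exact hA (Matrix.exists_mulVec_eq_zero_iff.mp this)
  set N := LinearMap.range φ with hN
  obtain ⟨m, snf⟩ := Submodule.smithNormalForm b N
  set e0 : (Fin n → R) ≃ₗ[R] N := LinearEquiv.ofInjective φ hinj with he0
  have hmn : m = n := by
    have b1 : Module.Basis (Fin n) R N := b.map e0
    exact Fin.equiv_iff_eq.mp ⟨snf.bN.indexEquiv b1⟩
  subst hmn
  obtain ⟨bM, bN, f, a, hsnf⟩ := snf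
  have hfbij : Function.Bijective f := Finite.injective_iff_bijective.mp f.injective
  set e : Fin m ≃ Fin m := Equiv.ofBijective f hfbij with he
  set c : Module.Basis (Fin m) R (Fin m → R) := bM.reindex e.symm with hc
  have hc_apply : ∀ i, c i = bM (f i) := by
    intro i; rw [hc, Module.Basis.reindex_apply, Equiv.symm_symm, he]; rfl
  refine ⟨b.toMatrix c, LinearMap.toMatrix b bN e0.toLinearMap, a, ?_, ?_, ?_⟩
  · exact Matrix.isUnit_det_of_right_inverse (Module.Basis.toMatrix_mul_toMatrix_flip b c)
  · exact LinearEquiv.isUnit_det e0 b bN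
  · have hcomp : N.subtype ∘ₗ (e0.toLinearMap) = φ := by
      exact LinearMap.ext fun x => LinearEquiv.ofInjective_apply (h := hinj) φ x
    have h1 : A = LinearMap.toMatrix b b φ := by
      rw [hφ, LinearMap.toMatrix_toLin]
    rw [h1, ← hcomp, LinearMap.toMatrix_comp b bN b]
    congr 1
    ext i j
    rw [LinearMap.toMatrix_apply, Matrix.mul_diagonal, Module.Basis.toMatrix_apply,
      Submodule.subtype_apply, hsnf j, hc_apply]
    simp [mul_comm]

/-- membership data for a "generalized GL" matrix over a subring `S` of a field. -/
private def GLm {Q : Type*} [Field Q] {n : ℕ} (S : Subring Q)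
    (M : Matrix (Fin n) (Fin n) Q) : Prop :=
  (∀ i j, M i j ∈ S) ∧ M.det ≠ 0 ∧ M.det ∈ S ∧ M.det⁻¹ ∈ S

private lemma GLm_map {Z Q : Type*} [CommRing Z] [Field Q] [Algebra Z Q]
    (hinj : Function.Injective (algebraMap Z Q)) {n : ℕ} (S : Subring Q)
    (him : ∀ z : Z, algebraMap Z Q z ∈ S)
    (L : Matrix (Fin n) (Fin n) Z) (hL : IsUnit L.det) :
    GLm S (L.map (algebraMap Z Q)) := by
  obtain ⟨U, hU⟩ := hL
  have hdet : (L.map (algebraMap Z Q)).det = algebraMap Z Q L.det :=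
    (RingHom.map_det _ _).symm
  refine ⟨fun i j => him _, ?_, ?_, ?_⟩
  · rw [hdet]
    exact (IsUnit.map (algebraMap Z Q) (⟨U, hU⟩ : IsUnit L.det)).ne_zero
  · rw [hdet]; exact him _
  · rw [hdet, ← hU]
    have h1 : algebraMap Z Q ↑U * algebraMap Z Q ↑(U⁻¹) = 1 := by
      rw [← map_mul, Units.mul_inv, map_one]
    rw [inv_eq_of_mul_eq_one_right h1]
    exact him _

private lemma GLm_mul_diag {Q : Type*} [Field Q] {n : ℕ} (S : Subring Q)
    {M : Matrix (Fin n) (Fin n) Q} (hM : GLm S M) {v : Fin n → Q}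
    (hv : ∀ i, v i ∈ S) (hvi : ∀ i, (v i)⁻¹ ∈ S) (hv0 : ∀ i, v i ≠ 0) :
    GLm S (M * Matrix.diagonal v) ∧ GLm S (Matrix.diagonal v * M) := by
  obtain ⟨hMm, hM0, hMd, hMdi⟩ := hM
  have hp0 : (∏ i, v i) ≠ 0 := Finset.prod_ne_zero_iff.mpr fun i _ => hv0 i
  have hpS : (∏ i, v i) ∈ S := prod_mem fun i _ => hv i
  have hpSi : (∏ i, v i)⁻¹ ∈ S := by
    rw [← Finset.prod_inv_distrib]
    exact prod_mem fun i _ => hvi i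
  constructor
  · refine ⟨fun i j => ?_, ?_, ?_, ?_⟩
    · rw [Matrix.mul_diagonal]; exact S.mul_mem (hMm i j) (hv j)
    · rw [Matrix.det_mul, Matrix.det_diagonal]; exact mul_ne_zero hM0 hp0
    · rw [Matrix.det_mul, Matrix.det_diagonal]; exact S.mul_mem hMd hpS
    · rw [Matrix.det_mul, Matrix.det_diagonal, mul_inv]; exact S.mul_mem hMdi hpSi
  · refine ⟨fun i j => ?_, ?_, ?_, ?_⟩
    · rw [Matrix.diagonal_mul]; exact S.mul_mem (hv i) (hMm i j)
    · rw [Matrix.det_mul, Matrix.det_diagonal]; exact mul_ne_zero hp0 hM0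
    · rw [Matrix.det_mul, Matrix.det_diagonal]; exact S.mul_mem hpS hMd
    · rw [Matrix.det_mul, Matrix.det_diagonal, mul_inv]; exact S.mul_mem hpSi hMdi

/-- for a PID `Z` with fraction field `Q` and a set `T` of primes of `Z`,
every `A ∈ GL_n(Q)` factors as `A = B · C` with `B ∈ GL_n(Z[T⁻¹])` and
`C ∈ GL_n(Z[(P∖T)⁻¹])`; if `det A = 1`, then `B, C` can be chosen with determinant `1`.
Here `Z[T⁻¹]` is realized as the subring of `Q` generated by `Z` together with the
inverses of the primes in `T`, and similarly for the complementary set of primes. -/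
theorem GL_factorization {Z : Type*} [CommRing Z] [IsDomain Z] [IsPrincipalIdealRing Z]
    {Q : Type*} [Field Q] [Algebra Z Q] [IsFractionRing Z Q]
    (T : Set Z) (hT : ∀ p ∈ T, Prime p) (n : ℕ)
    (ZT ZT' : Subring Q)
    (hZT : ZT = Subring.closure (Set.range (algebraMap Z Q) ∪
      {x : Q | ∃ p ∈ T, (algebraMap Z Q p) * x = 1}))
    (hZT' : ZT' = Subring.closure (Set.range (algebraMap Z Q) ∪
      {x : Q | ∃ p : Z, Prime p ∧ p ∉ T ∧ (algebraMap Z Q p) * x = 1}))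
    (A : Matrix (Fin n) (Fin n) Q) (hA : IsUnit A.det) :
    (∃ B C : Matrix (Fin n) (Fin n) Q, A = B * C ∧
      (∀ i j, B i j ∈ ZT) ∧ B.det ≠ 0 ∧ B.det⁻¹ ∈ ZT ∧
      (∀ i j, C i j ∈ ZT') ∧ C.det ≠ 0 ∧ C.det⁻¹ ∈ ZT') ∧
    (A.det = 1 → ∃ B C : Matrix (Fin n) (Fin n) Q, A = B * C ∧
      (∀ i j, B i j ∈ ZT) ∧ B.det = 1 ∧ (∀ i j, C i j ∈ ZT') ∧ C.det = 1) := by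
  classical
  have hQinj : Function.Injective (algebraMap Z Q) := IsFractionRing.injective Z Q
  have hMapNe : ∀ {z : Z}, z ≠ 0 → algebraMap Z Q z ≠ 0 := by
    intro z hz h
    exact hz (hQinj (by rw [h, map_zero]))
  have hZmemT : ∀ z : Z, algebraMap Z Q z ∈ ZT := fun z =>
    hZT ▸ Subring.subset_closure (Or.inl ⟨z, rfl⟩)
  have hZmemT' : ∀ z : Z, algebraMap Z Q z ∈ ZT' := fun z =>
    hZT' ▸ Subring.subset_closure (Or.inl ⟨z, rfl⟩)
  have hTinv : ∀ p ∈ T, (algebraMap Z Q p)⁻¹ ∈ ZT := by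
    intro p hp
    exact hZT ▸ Subring.subset_closure
      (Or.inr ⟨p, hp, mul_inv_cancel₀ (hMapNe (hT p hp).ne_zero)⟩)
  have hT'inv : ∀ p : Z, Prime p → p ∉ T → (algebraMap Z Q p)⁻¹ ∈ ZT' := by
    intro p hp hpt
    exact hZT' ▸ Subring.subset_closure
      (Or.inr ⟨p, hp, hpt, mul_inv_cancel₀ (hMapNe hp.ne_zero)⟩)
  have hUinvT : ∀ (S : Subring Q), (∀ z : Z, algebraMap Z Q z ∈ S) →
      ∀ u : Zˣ, (algebraMap Z Q ↑u)⁻¹ ∈ S := by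
    intro S hS u
    have h1 : algebraMap Z Q ↑u * algebraMap Z Q ↑(u⁻¹) = 1 := by
      rw [← map_mul, Units.mul_inv, map_one]
    rw [inv_eq_of_mul_eq_one_right h1]
    exact hS _
  -- the splitting lemma
  have hsplit : ∀ d : Z, d ≠ 0 → ∃ a b : Z, d = a * b ∧ a ≠ 0 ∧ b ≠ 0 ∧
      (algebraMap Z Q a)⁻¹ ∈ ZT ∧ (algebraMap Z Q b)⁻¹ ∈ ZT' := by
    intro d
    refine UniqueFactorizationMonoid.induction_on_prime d ?_ ?_ ?_
    · intro h; exact absurd rfl h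
    · intro x hx _
      obtain ⟨u, rfl⟩ := hx
      refine ⟨↑u, 1, (mul_one _).symm, u.ne_zero, one_ne_zero, hUinvT ZT hZmemT u, ?_⟩
      rw [map_one, inv_one]; exact Subring.one_mem _
    · rintro a0 p ha0 hp ih -
      obtain ⟨x, y, rfl, hx0, hy0, hxT, hyT'⟩ := ih ha0
      by_cases hpT : ∃ q ∈ T, Associated q p
      · obtain ⟨q, hq, u, hu⟩ := hpT
        have hpinv : (algebraMap Z Q p)⁻¹ ∈ ZT := by
          rw [← hu, map_mul, mul_inv]
          exact ZT.mul_mem (hTinv q hq) (hUinvT ZT hZmemT u)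
        refine ⟨p * x, y, by ring, mul_ne_zero hp.ne_zero hx0, hy0, ?_, hyT'⟩
        rw [map_mul, mul_inv]
        exact ZT.mul_mem hpinv hxT
      · have hpt : p ∉ T := fun h => hpT ⟨p, h, Associated.refl p⟩
        refine ⟨x, p * y, by ring, hx0, mul_ne_zero hp.ne_zero hy0, hxT, ?_⟩
        rw [map_mul, mul_inv]
        exact ZT'.mul_mem (hT'inv p hp hpt) hyT'
  -- common denominator
  have hdetA0 : A.det ≠ 0 := hA.ne_zero
  obtain ⟨dm, hdm⟩ := IsLocalization.exist_integer_multiples (nonZeroDivisors Z)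
    Finset.univ (fun p : Fin n × Fin n => A p.1 p.2)
  set d : Z := ↑dm with hd
  have hd0 : d ≠ 0 := nonZeroDivisors.coe_ne_zero dm
  have hdQ0 : algebraMap Z Q d ≠ 0 := hMapNe hd0
  have h2 : ∀ i j : Fin n, ∃ z : Z, algebraMap Z Q z = algebraMap Z Q d * A i j := by
    intro i j
    obtain ⟨z, hz⟩ := hdm (i, j) (Finset.mem_univ _)
    exact ⟨z, by rw [hz, Algebra.smul_def]⟩
  choose A2 hA2 using h2
  set A'' : Matrix (Fin n) (Fin n) Z := Matrix.of A2 with hA''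
  have key : A''.map (algebraMap Z Q) = (algebraMap Z Q d) • A := by
    ext i j
    rw [Matrix.map_apply, Matrix.smul_apply, hA'']
    rw [Matrix.of_apply, hA2 i j]
    rw [smul_eq_mul]
  have hA''det0 : A''.det ≠ 0 := by
    intro h0
    have h1 : algebraMap Z Q A''.det = 0 := by rw [h0, map_zero]
    rw [RingHom.map_det, RingHom.mapMatrix_apply, key, Matrix.det_smul,
      Fintype.card_fin] at h1
    exact (mul_ne_zero (pow_ne_zero n hdQ0) hdetA0) h1
  -- Smith normal form
  obtain ⟨L, Rm, w, hL, hR, hfact⟩ := matrix_snf_aux A'' hA''det0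
  have hw0 : ∀ i, w i ≠ 0 := by
    intro i hi
    apply hA''det0
    rw [hfact, Matrix.det_mul, Matrix.det_mul, Matrix.det_diagonal]
    rw [Finset.prod_eq_zero (Finset.mem_univ i) hi]
    ring
  -- split d and the w i
  obtain ⟨t, s, hdts, ht0, hs0, htT, hsT'⟩ := hsplit d hd0
  choose a b hab ha0 hb0 haT hbT' using fun i => hsplit (w i) (hw0 i)
  set Lq := L.map (algebraMap Z Q) with hLq
  set Rq := Rm.map (algebraMap Z Q) with hRq
  set vT : Fin n → Q := fun i => algebraMap Z Q (a i) * (algebraMap Z Q t)⁻¹ with hvT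
  set vS : Fin n → Q := fun i => algebraMap Z Q (b i) * (algebraMap Z Q s)⁻¹ with hvS
  have htQ0 : algebraMap Z Q t ≠ 0 := hMapNe ht0
  have hsQ0 : algebraMap Z Q s ≠ 0 := hMapNe hs0
  have hvT0 : ∀ i, vT i ≠ 0 := fun i => mul_ne_zero (hMapNe (ha0 i)) (inv_ne_zero htQ0)
  have hvS0 : ∀ i, vS i ≠ 0 := fun i => mul_ne_zero (hMapNe (hb0 i)) (inv_ne_zero hsQ0)
  have hvTm : ∀ i, vT i ∈ ZT := fun i => ZT.mul_mem (hZmemT _) htT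
  have hvSm : ∀ i, vS i ∈ ZT' := fun i => ZT'.mul_mem (hZmemT' _) hsT'
  have hvTi : ∀ i, (vT i)⁻¹ ∈ ZT := by
    intro i
    rw [hvT, mul_inv, inv_inv]
    exact ZT.mul_mem (haT i) (hZmemT t)
  have hvSi : ∀ i, (vS i)⁻¹ ∈ ZT' := by
    intro i
    rw [hvS, mul_inv, inv_inv]
    exact ZT'.mul_mem (hbT' i) (hZmemT' s)
  set B : Matrix (Fin n) (Fin n) Q := Lq * Matrix.diagonal vT with hB
  set C : Matrix (Fin n) (Fin n) Q := Matrix.diagonal vS * Rq with hC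
  have hGB : GLm ZT B :=
    (GLm_mul_diag ZT (GLm_map hQinj ZT hZmemT L hL) hvTm hvTi hvT0).1
  have hGC : GLm ZT' C :=
    (GLm_mul_diag ZT' (GLm_map hQinj ZT' hZmemT' Rm hR) hvSm hvSi hvS0).2
  -- the product identity
  have hBC : A = B * C := by
    have h3 : B * C = Lq * (Matrix.diagonal vT * Matrix.diagonal vS) * Rq := by
      rw [hB, hC]
      rw [Matrix.mul_assoc, Matrix.mul_assoc, Matrix.mul_assoc]
    have h4 : ∀ i, vT i * vS i = (algebraMap Z Q d)⁻¹ * algebraMap Z Q (w i) := by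
      intro i
      rw [hvT, hvS, mul_mul_mul_comm, ← mul_inv, ← map_mul, ← map_mul, ← hab i, ← hdts]
      ring
    have h4' : (fun i => vT i * vS i) =
        (algebraMap Z Q d)⁻¹ • (fun i => algebraMap Z Q (w i)) := by
      funext i
      rw [Pi.smul_apply, smul_eq_mul]
      exact h4 i
    have h5 : Matrix.diagonal vT * Matrix.diagonal vS =
        (algebraMap Z Q d)⁻¹ • (Matrix.diagonal w).map (algebraMap Z Q) := by
      rw [Matrix.diagonal_mul_diagonal, h4', Matrix.diagonal_smul,
        Matrix.diagonal_map (map_zero _)]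
    rw [h3, h5, Matrix.mul_smul, Matrix.smul_mul]
    rw [hLq, hRq, ← Matrix.map_mul, ← Matrix.map_mul, ← hfact, key]
    rw [smul_smul, inv_mul_cancel₀ hdQ0, one_smul]
  obtain ⟨hBm, hB0, hBd, hBdi⟩ := hGB
  obtain ⟨hCm, hC0, hCd, hCdi⟩ := hGC
  constructor
  · exact ⟨B, C, hBC, hBm, hB0, hBdi, hCm, hC0, hCdi⟩
  · intro hA1
    rcases Nat.eq_zero_or_pos n with hn | hn
    · subst hn
      exact ⟨A, 1, (Matrix.mul_one A).symm, fun i => i.elim0, hA1,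
        fun i => i.elim0, Matrix.det_one⟩
    · set i₀ : Fin n := ⟨0, hn⟩ with hi₀
      have hdetC : C.det = B.det⁻¹ := by
        have h6 : B.det * C.det = 1 := by rw [← Matrix.det_mul, ← hBC, hA1]
        exact (inv_eq_of_mul_eq_one_right h6).symm
      have hBdT' : B.det ∈ ZT' := by
        have : B.det = C.det⁻¹ := by rw [hdetC, inv_inv]
        rw [this]; exact hCdi
      have hBdiT' : B.det⁻¹ ∈ ZT' := hdetC ▸ hCd
      set u : Fin n → Q := Function.update (fun _ => (1 : Q)) i₀ B.det⁻¹ with hu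
      set u' : Fin n → Q := Function.update (fun _ => (1 : Q)) i₀ B.det with hu'
      have hum : ∀ i, u i ∈ ZT := by
        intro i
        rw [hu]
        rcases eq_or_ne i i₀ with h | h
        · rw [h, Function.update_self]; exact hBdi
        · rw [Function.update_of_ne h]; exact Subring.one_mem _
      have hu'm : ∀ i, u' i ∈ ZT' := by
        intro i
        rw [hu']
        rcases eq_or_ne i i₀ with h | h
        · rw [h, Function.update_self]; exact hBdT'
        · rw [Function.update_of_ne h]; exact Subring.one_mem _
      have huu' : ∀ i, u i * u' i = 1 := by
        intro i
        rw [hu, hu']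
        rcases eq_or_ne i i₀ with h | h
        · rw [h, Function.update_self, Function.update_self, inv_mul_cancel₀ hB0]
        · rw [Function.update_of_ne h, Function.update_of_ne h, one_mul]
      have hprodu : (∏ i, u i) = B.det⁻¹ := by
        rw [hu, Finset.prod_update_of_mem (Finset.mem_univ i₀)]
        simp
      have hprodu' : (∏ i, u' i) = B.det := by
        rw [hu', Finset.prod_update_of_mem (Finset.mem_univ i₀)]
        simp
      refine ⟨B * Matrix.diagonal u, Matrix.diagonal u' * C, ?_, ?_, ?_, ?_, ?_⟩
      · rw [Matrix.mul_assoc, ← Matrix.mul_assoc (Matrix.diagonal u),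
          Matrix.diagonal_mul_diagonal]
        have : (fun i => u i * u' i) = fun _ => (1 : Q) := funext huu'
        rw [this, Matrix.diagonal_one, Matrix.one_mul]
        exact hBC
      · intro i j
        rw [Matrix.mul_diagonal]
        exact ZT.mul_mem (hBm i j) (hum j)
      · rw [Matrix.det_mul, Matrix.det_diagonal, hprodu, mul_inv_cancel₀ hB0]
      · intro i j
        rw [Matrix.diagonal_mul]
        exact ZT'.mul_mem (hu'm i) (hCm i j)
      · rw [Matrix.det_mul, Matrix.det_diagonal, hprodu', hdetC, mul_inv_cancel₀ hB0]
end

section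
/- Let F be a finite field and consider the valuation ν(f/g) = deg g − deg f on Q = F(t) with valuation ring R. Then the stabilizer of the vertex [R^n] of the affine building (homothety class of the standard R-lattice in Q^n) under the action of GL_n(F[t]) equals GL_n(F); in particular it is finite, and the action of GL_n(F[t]) on the affine building is proper. -/
set_option synthInstance.maxHeartbeats 1000000
set_option maxHeartbeats 1000000

/-- The valuation ring of the valuation `ν(p/q) = deg q - deg p` on `F(t)`,
i.e. rational functions of nonpositive `intDegree`. -/
noncomputable def valR (F : Type*) [Field F] : Subring (RatFunc F) where
  carrier := {x | x.intDegree ≤ 0}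
  zero_mem' := by simp [Set.mem_setOf_eq, RatFunc.intDegree_zero]
  one_mem' := by simp [Set.mem_setOf_eq, RatFunc.intDegree_one]
  add_mem' := by
    intro a b ha hb
    rcases eq_or_ne b 0 with rfl | hb0
    · simpa using ha
    rcases eq_or_ne (a + b) 0 with h | h
    · simp [Set.mem_setOf_eq, h, RatFunc.intDegree_zero]
    · simp only [Set.mem_setOf_eq] at ha hb ⊢
      exact le_trans (RatFunc.intDegree_add_le hb0 h) (sup_le ha hb)
  mul_mem' := by
    intro a b ha hb
    rcases eq_or_ne a 0 with rfl | ha0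
    · simp [Set.mem_setOf_eq, RatFunc.intDegree_zero]
    rcases eq_or_ne b 0 with rfl | hb0
    · simp [Set.mem_setOf_eq, RatFunc.intDegree_zero]
    · simp only [Set.mem_setOf_eq] at ha hb ⊢
      rw [RatFunc.intDegree_mul ha0 hb0]
      omega
  neg_mem' := by
    intro a ha
    simpa [Set.mem_setOf_eq, RatFunc.intDegree_neg] using ha

/-- `M ∈ GL_n(F[t])` stabilizes the homothety class of the `R`-lattice `L` in
`F(t)^n`: the image of `L` under `M` equals the image of `L` under multiplication by
some nonzero scalar `c ∈ F(t)`. -/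
noncomputable def stabilizesClass (F : Type*) [Field F] (n : ℕ)
    (L : Submodule (valR F) (Fin n → RatFunc F))
    (M : Matrix (Fin n) (Fin n) (Polynomial F)) : Prop :=
  ∃ c : RatFunc F, c ≠ 0 ∧
    L.map (LinearMap.restrictScalars (valR F)
      ((M.map (algebraMap (Polynomial F) (RatFunc F))).mulVecLin)) =
    L.map (LinearMap.restrictScalars (valR F)
      (c • (LinearMap.id : (Fin n → RatFunc F) →ₗ[RatFunc F] (Fin n → RatFunc F))))

namespace StabAux

variable {F : Type*} [Field F] {n : ℕ}

lemma intDegree_inv {x : RatFunc F} (hx : x ≠ 0) : x⁻¹.intDegree = -x.intDegree := by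
  have h : x * x⁻¹ = 1 := mul_inv_cancel₀ hx
  have h2 := RatFunc.intDegree_mul hx (inv_ne_zero hx)
  rw [h, RatFunc.intDegree_one] at h2
  omega

lemma coe_smul_apply (r : valR F) (v : Fin n → RatFunc F) (i : Fin n) :
    (r • v) i = (r : RatFunc F) * v i := rfl

lemma intDegree_add_le' (a b : RatFunc F) :
    (a + b).intDegree ≤ max 0 (max a.intDegree b.intDegree) := by
  rcases eq_or_ne b 0 with rfl | hb
  · rw [add_zero]
    exact le_max_of_le_right (le_max_left _ _)
  rcases eq_or_ne (a + b) 0 with h | h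
  · rw [h, RatFunc.intDegree_zero]
    exact le_max_left _ _
  · exact le_trans (RatFunc.intDegree_add_le hb h) (le_max_right _ _)

lemma intDegree_mul_le' {r : RatFunc F} (hr : r.intDegree ≤ 0) (b : RatFunc F) :
    (r * b).intDegree ≤ max 0 b.intDegree := by
  rcases eq_or_ne r 0 with rfl | hr0
  · simp
  rcases eq_or_ne b 0 with rfl | hb0
  · simp
  · rw [RatFunc.intDegree_mul hr0 hb0]
    exact le_trans (by omega : r.intDegree + b.intDegree ≤ b.intDegree) (le_max_right _ _)

lemma mem_L0_iff (x : Fin n → RatFunc F) :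
    x ∈ Submodule.span (valR F) (Set.range fun i => Pi.single i (1 : RatFunc F)) ↔
      ∀ i, (x i).intDegree ≤ 0 := by
  constructor
  · intro hx
    induction hx using Submodule.span_induction with
    | mem y hy =>
      obtain ⟨k, rfl⟩ := hy
      intro i
      rcases eq_or_ne i k with rfl | h
      · simp [Pi.single_apply]
      · simp [Pi.single_apply, h]
    | zero => intro i; simp
    | add a b _ _ ha hb =>
      intro i
      rw [Pi.add_apply]
      exact le_trans (intDegree_add_le' (a i) (b i)) (max_le le_rfl (max_le (ha i) (hb i)))
    | smul r a _ ha =>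
      intro i
      rw [coe_smul_apply]
      exact le_trans (intDegree_mul_le' r.2 (a i)) (max_le le_rfl (ha i))
  · intro hx
    rw [← Finset.univ_sum_single x]
    refine sum_mem fun i _ => ?_
    have h : Pi.single i (x i)
        = (⟨x i, hx i⟩ : valR F) • (Pi.single i (1 : RatFunc F) : Fin n → RatFunc F) := by
      funext j
      rw [coe_smul_apply]
      simp [Pi.single_apply, mul_ite]
    rw [h]
    exact Submodule.smul_mem _ _ (Submodule.subset_span ⟨i, rfl⟩)

lemma bound_of_fg (L : Submodule (valR F) (Fin n → RatFunc F)) (h : L.FG) :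
    ∃ D : ℤ, 0 ≤ D ∧ ∀ x ∈ L, ∀ i, (x i).intDegree ≤ D := by
  obtain ⟨T, hT⟩ := h
  refine ⟨((T.sup fun v => Finset.univ.sup fun i : Fin n => (v i).intDegree.toNat : ℕ) : ℤ),
    Nat.cast_nonneg _, ?_⟩
  intro x hx
  rw [← hT] at hx
  induction hx using Submodule.span_induction with
  | mem y hy =>
    intro i
    have h3 : (y i).intDegree.toNat ≤ Finset.univ.sup fun i : Fin n => (y i).intDegree.toNat :=
      Finset.le_sup (f := fun i : Fin n => (y i).intDegree.toNat) (Finset.mem_univ i)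
    have h2 : (Finset.univ.sup fun i : Fin n => (y i).intDegree.toNat)
        ≤ T.sup fun v => Finset.univ.sup fun i : Fin n => (v i).intDegree.toNat :=
      Finset.le_sup (f := fun v : Fin n → RatFunc F =>
        Finset.univ.sup fun i : Fin n => (v i).intDegree.toNat) (Finset.mem_coe.mp hy)
    exact le_trans (Int.self_le_toNat (y i).intDegree) (by exact_mod_cast le_trans h3 h2)
  | zero => intro i; simp
  | add a b _ _ ha hb =>
    intro i
    rw [Pi.add_apply]
    exact le_trans (intDegree_add_le' (a i) (b i))
      (max_le (Nat.cast_nonneg _) (max_le (ha i) (hb i)))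
  | smul r a _ ha =>
    intro i
    rw [coe_smul_apply]
    exact le_trans (intDegree_mul_le' r.2 (a i)) (max_le (Nat.cast_nonneg _) (ha i))

lemma exists_scale (L : Submodule (valR F) (Fin n → RatFunc F)) (v : Fin n → RatFunc F)
    (hv : v ∈ Submodule.span (RatFunc F) (L : Set (Fin n → RatFunc F))) :
    ∃ s : RatFunc F, s ≠ 0 ∧ s.intDegree ≤ 0 ∧ s • v ∈ L := by
  induction hv using Submodule.span_induction with
  | mem y hy => exact ⟨1, one_ne_zero, by simp, by simpa using hy⟩
  | zero => exact ⟨1, one_ne_zero, by simp, by simp⟩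
  | add x y _ _ hx hy =>
    obtain ⟨sx, hx0, hxd, hxL⟩ := hx
    obtain ⟨sy, hy0, hyd, hyL⟩ := hy
    refine ⟨sx * sy, mul_ne_zero hx0 hy0, ?_, ?_⟩
    · rw [RatFunc.intDegree_mul hx0 hy0]; omega
    · have h1 : (sx * sy) • (x + y)
          = (⟨sy, hyd⟩ : valR F) • (sx • x) + (⟨sx, hxd⟩ : valR F) • (sy • y) := by
        show (sx * sy) • (x + y) = sy • (sx • x) + sx • (sy • y)
        rw [smul_add, smul_smul, smul_smul, mul_comm sy sx]
      rw [h1]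
      exact add_mem (L.smul_mem _ hxL) (L.smul_mem _ hyL)
  | smul q x _ ih =>
    obtain ⟨s, h0, hd, hL⟩ := ih
    rcases eq_or_ne q 0 with rfl | hq
    · exact ⟨1, one_ne_zero, by simp, by simp⟩
    · have hXk : (algebraMap (Polynomial F) (RatFunc F) (Polynomial.X ^ q.intDegree.toNat)) ≠ 0 := by
        exact RatFunc.algebraMap_ne_zero (pow_ne_zero _ Polynomial.X_ne_zero)
      set b : RatFunc F :=
        (algebraMap (Polynomial F) (RatFunc F) (Polynomial.X ^ q.intDegree.toNat))⁻¹ with hb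
      have hb0 : b ≠ 0 := inv_ne_zero hXk
      have hbd : b.intDegree = -(q.intDegree.toNat : ℤ) := by
        rw [hb, intDegree_inv hXk, RatFunc.intDegree_polynomial, Polynomial.natDegree_X_pow]
      have hqb : (q * b).intDegree ≤ 0 := by
        rw [RatFunc.intDegree_mul hq hb0, hbd]
        have := Int.self_le_toNat q.intDegree
        omega
      refine ⟨s * b, mul_ne_zero h0 hb0, ?_, ?_⟩
      · rw [RatFunc.intDegree_mul h0 hb0, hbd]
        have : (0:ℤ) ≤ q.intDegree.toNat := Nat.cast_nonneg _
        omega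
      · have h1 : (s * b) • (q • x) = (⟨q * b, hqb⟩ : valR F) • (s • x) := by
          show (s * b) • (q • x) = (q * b) • (s • x)
          rw [smul_smul, smul_smul]
          congr 1
          ring
        rw [h1]
        exact L.smul_mem _ hL

lemma exists_single_mem (L : Submodule (valR F) (Fin n → RatFunc F))
    (hsp : Submodule.span (RatFunc F) (L : Set (Fin n → RatFunc F)) = ⊤) :
    ∃ s : RatFunc F, s ≠ 0 ∧ ∀ j : Fin n, Pi.single j s ∈ L := by
  have h : ∀ j : Fin n, ∃ s : RatFunc F, s ≠ 0 ∧ s.intDegree ≤ 0 ∧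
      s • (Pi.single j (1 : RatFunc F) : Fin n → RatFunc F) ∈ L := by
    intro j
    exact exists_scale L _ (by rw [hsp]; trivial)
  choose t ht0 htd htL using h
  refine ⟨∏ k, t k, Finset.prod_ne_zero_iff.mpr fun k _ => ht0 k, fun j => ?_⟩
  have hmem : (∏ k ∈ Finset.univ.erase j, t k) ∈ valR F :=
    prod_mem fun k _ => htd k
  have heq : Pi.single j (∏ k, t k)
      = (⟨_, hmem⟩ : valR F) • (t j • (Pi.single j (1 : RatFunc F) : Fin n → RatFunc F)) := by
    show Pi.single j (∏ k, t k)
      = (∏ k ∈ Finset.univ.erase j, t k) • (t j • (Pi.single j (1 : RatFunc F) : Fin n → RatFunc F))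
    rw [smul_smul, Finset.prod_erase_mul _ _ (Finset.mem_univ j)]
    funext i
    simp [Pi.smul_apply, smul_eq_mul, Pi.single_apply, mul_ite]
  rw [heq]
  exact L.smul_mem _ (htL j)

lemma entry_bound (L : Submodule (valR F) (Fin n → RatFunc F))
    (D : ℤ) (hD : ∀ x ∈ L, ∀ i, (x i).intDegree ≤ D)
    {s : RatFunc F} (hs : s ≠ 0) (hsL : ∀ j : Fin n, Pi.single j s ∈ L)
    (M : Matrix (Fin n) (Fin n) (Polynomial F)) {c : RatFunc F} (hc : c ≠ 0)
    (h : ∀ x ∈ L, ∃ y ∈ L, c • y = (M.map (algebraMap (Polynomial F) (RatFunc F))).mulVec x) :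
    ∀ i j, M i j ≠ 0 → ((M i j).natDegree : ℤ) + s.intDegree - c.intDegree ≤ D := by
  intro i j hij
  obtain ⟨y, hy, hcy⟩ := h _ (hsL j)
  have hvali : c * y i = algebraMap (Polynomial F) (RatFunc F) (M i j) * s := by
    have h1 := congrFun hcy i
    have h2 : (M.map (algebraMap (Polynomial F) (RatFunc F))).mulVec (Pi.single j s) i
        = algebraMap (Polynomial F) (RatFunc F) (M i j) * s := by
      simp [Matrix.mulVec_single, Matrix.map_apply]
    rw [h2] at h1
    simpa using h1
  have hMq : algebraMap (Polynomial F) (RatFunc F) (M i j) ≠ 0 := by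
    simpa using hij
  have hyi : y i ≠ 0 := by
    intro h0
    rw [h0, mul_zero] at hvali
    exact mul_ne_zero hMq hs hvali.symm
  have hDy := hD y hy i
  have hdeg : c.intDegree + (y i).intDegree = ((M i j).natDegree : ℤ) + s.intDegree := by
    have h3 := congrArg RatFunc.intDegree hvali
    rwa [RatFunc.intDegree_mul hc hyi, RatFunc.intDegree_mul hMq hs,
      RatFunc.intDegree_polynomial] at h3
  omega

lemma stab_bound (L : Submodule (valR F) (Fin n → RatFunc F))
    (D : ℤ) (hD : ∀ x ∈ L, ∀ i, (x i).intDegree ≤ D)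
    {s : RatFunc F} (hs : s ≠ 0) (hsL : ∀ j : Fin n, Pi.single j s ∈ L)
    (M : Matrix (Fin n) (Fin n) (Polynomial F)) (hdet : IsUnit M.det)
    (hstab : stabilizesClass F n L M) :
    ∀ i j, M i j ≠ 0 → ((M i j).natDegree : ℤ) ≤ 2 * D - 2 * s.intDegree := by
  obtain ⟨c, hc, heq⟩ := hstab
  set φ := algebraMap (Polynomial F) (RatFunc F) with hφ
  haveI := M.invertibleOfIsUnitDet hdet
  set N := ⅟M with hN
  have hMN : M * N = 1 := mul_invOf_self M
  have hNM : N * M = 1 := invOf_mul_self M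
  have hNMq : N.map φ * M.map φ = 1 := by
    rw [← Matrix.map_mul, hNM, Matrix.map_one _ (map_zero φ) (map_one φ)]
  have hMmem : ∀ x ∈ L, ∃ y ∈ L, c • y = (M.map φ).mulVec x := by
    intro x hx
    have h1 : (M.map φ).mulVec x ∈ L.map (LinearMap.restrictScalars (valR F)
        ((M.map φ).mulVecLin)) := Submodule.mem_map.mpr ⟨x, hx, by simp⟩
    rw [heq] at h1
    obtain ⟨y, hy, hyx⟩ := Submodule.mem_map.mp h1
    exact ⟨y, hy, by simpa using hyx⟩
  have hNmem : ∀ x ∈ L, ∃ y ∈ L, c⁻¹ • y = (N.map φ).mulVec x := by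
    intro x hx
    have h1 : c • x ∈ L.map (LinearMap.restrictScalars (valR F)
        (c • (LinearMap.id : (Fin n → RatFunc F) →ₗ[RatFunc F] (Fin n → RatFunc F)))) :=
      Submodule.mem_map.mpr ⟨x, hx, by simp⟩
    rw [← heq] at h1
    obtain ⟨y, hy, hyx⟩ := Submodule.mem_map.mp h1
    have hyx' : (M.map φ).mulVec y = c • x := by simpa using hyx
    refine ⟨y, hy, ?_⟩
    have h3 : (N.map φ).mulVec ((M.map φ).mulVec y) = (N.map φ).mulVec (c • x) := by rw [hyx']
    rw [Matrix.mulVec_mulVec, hNMq, Matrix.one_mulVec, Matrix.mulVec_smul] at h3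
    rw [h3, inv_smul_smul₀ hc]
  have bM := entry_bound L D hD hs hsL M hc hMmem
  have bN := entry_bound L D hD hs hsL N (inv_ne_zero hc) hNmem
  intro i j hij
  have hone : (M * N) i i = 1 := by rw [hMN, Matrix.one_apply_eq]
  rw [Matrix.mul_apply] at hone
  have hex : ∃ k, N k i ≠ 0 := by
    by_contra hcon
    push_neg at hcon
    simp [hcon] at hone
  obtain ⟨k, hk⟩ := hex
  have h1 := bM i j hij
  have h2 := bN k i hk
  rw [intDegree_inv hc] at h2
  omega

end StabAux

open StabAux

/-- the stabilizer in `GL_n(F[t])` of the homothety class of the standard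
lattice `[Rⁿ]` of the affine building of `F(t)` (for the valuation at infinity) is
exactly `GL_n(F)` (matrices with constant entries); in particular it is finite, and —
properness of the action — the stabilizer of every vertex of the building is finite. -/
theorem stabilizer_standard_lattice (F : Type*) [Field F] [Finite F] (n : ℕ)
    (L₀ : Submodule (valR F) (Fin n → RatFunc F))
    (hL₀ : L₀ = Submodule.span (valR F)
      (Set.range fun i => Pi.single i (1 : RatFunc F))) :
    ({M : Matrix (Fin n) (Fin n) (Polynomial F) |
        IsUnit M.det ∧ stabilizesClass F n L₀ M} =
      {M : Matrix (Fin n) (Fin n) (Polynomial F) |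
        IsUnit M.det ∧ ∀ i j, ∃ a : F, M i j = Polynomial.C a}) ∧
    {M : Matrix (Fin n) (Fin n) (Polynomial F) |
      IsUnit M.det ∧ stabilizesClass F n L₀ M}.Finite ∧
    (∀ L : Submodule (valR F) (Fin n → RatFunc F), L.FG →
      Submodule.span (RatFunc F) (L : Set (Fin n → RatFunc F)) = ⊤ →
      {M : Matrix (Fin n) (Fin n) (Polynomial F) |
        IsUnit M.det ∧ stabilizesClass F n L M}.Finite) := by
  have hD0 : ∀ x ∈ L₀, ∀ i, (x i).intDegree ≤ (0 : ℤ) := by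
    intro x hx i
    rw [hL₀] at hx
    exact (mem_L0_iff x).mp hx i
  have hs0 : ∀ j : Fin n, Pi.single j (1 : RatFunc F) ∈ L₀ := by
    intro j
    rw [hL₀]
    exact Submodule.subset_span ⟨j, rfl⟩
  -- Part 3: properness
  have part3 : ∀ L : Submodule (valR F) (Fin n → RatFunc F), L.FG →
      Submodule.span (RatFunc F) (L : Set (Fin n → RatFunc F)) = ⊤ →
      {M : Matrix (Fin n) (Fin n) (Polynomial F) |
        IsUnit M.det ∧ stabilizesClass F n L M}.Finite := by
    intro L hfg hsp
    obtain ⟨D, hDnn, hD⟩ := bound_of_fg L hfg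
    obtain ⟨s, hs, hsL⟩ := exists_single_mem L hsp
    set B : ℕ := (2 * D - 2 * s.intDegree).toNat with hB
    have key : ∀ M ∈ {M : Matrix (Fin n) (Fin n) (Polynomial F) |
        IsUnit M.det ∧ stabilizesClass F n L M},
        ∀ i j, M i j ∈ Polynomial.degreeLT F (B + 1) := by
      rintro M ⟨hdet, hstab⟩ i j
      rw [Polynomial.mem_degreeLT]
      have hnat : (M i j).natDegree ≤ B := by
        rcases eq_or_ne (M i j) 0 with h | h
        · simp [h]
        · have := stab_bound L D hD hs hsL M hdet hstab i j h
          omega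
      exact lt_of_le_of_lt Polynomial.degree_le_natDegree
        (by exact_mod_cast Nat.lt_succ_of_le hnat)
    have hfin : ((Polynomial.degreeLT F (B + 1) : Submodule F (Polynomial F)) :
        Set (Polynomial F)).Finite := by
      haveI : Finite (Polynomial.degreeLT F (B + 1)) :=
        Finite.of_equiv _ (Polynomial.degreeLTEquiv F (B + 1)).toEquiv.symm
      exact Set.toFinite _
    have hrow : {v : Fin n → Polynomial F |
        ∀ j, v j ∈ Polynomial.degreeLT F (B + 1)}.Finite := by
      refine (Set.Finite.pi fun _ : Fin n => hfin).subset ?_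
      intro v hv
      rw [Set.mem_pi]
      intro j _
      exact hv j
    have hmatfin : {M : Matrix (Fin n) (Fin n) (Polynomial F) |
        ∀ i j, M i j ∈ Polynomial.degreeLT F (B + 1)}.Finite := by
      refine (Set.Finite.pi fun _ : Fin n => hrow).subset ?_
      intro M hM
      rw [Set.mem_pi]
      intro i _
      exact hM i
    exact hmatfin.subset fun M hM => key M hM
  -- Part 1: set equality
  have part1 : {M : Matrix (Fin n) (Fin n) (Polynomial F) |
        IsUnit M.det ∧ stabilizesClass F n L₀ M} =
      {M : Matrix (Fin n) (Fin n) (Polynomial F) |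
        IsUnit M.det ∧ ∀ i j, ∃ a : F, M i j = Polynomial.C a} := by
    ext M
    simp only [Set.mem_setOf_eq]
    constructor
    · rintro ⟨hdet, hstab⟩
      refine ⟨hdet, fun i j => ?_⟩
      rcases eq_or_ne (M i j) 0 with h | h
      · exact ⟨0, by simp [h]⟩
      · have hb := stab_bound L₀ 0 hD0 (s := (1 : RatFunc F)) one_ne_zero hs0 M hdet hstab i j h
        rw [RatFunc.intDegree_one] at hb
        have hnd : (M i j).natDegree = 0 := by omega
        obtain ⟨a, ha⟩ := Polynomial.natDegree_eq_zero.mp hnd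
        exact ⟨a, ha.symm⟩
    · rintro ⟨hdet, hconst⟩
      refine ⟨hdet, 1, one_ne_zero, ?_⟩
      -- RHS is L₀
      have hone : ((1 : RatFunc F) • (LinearMap.id :
          (Fin n → RatFunc F) →ₗ[RatFunc F] (Fin n → RatFunc F))) = LinearMap.id :=
        one_smul _ _
      rw [hone]
      have hrid : (LinearMap.restrictScalars (valR F) (LinearMap.id :
          (Fin n → RatFunc F) →ₗ[RatFunc F] (Fin n → RatFunc F))) = LinearMap.id := rfl
      rw [hrid, Submodule.map_id]
      -- constant matrix over F
      choose a ha using hconst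
      set M₀ : Matrix (Fin n) (Fin n) F := Matrix.of a with hM₀
      have hM : M = M₀.map Polynomial.C := Matrix.ext fun i j => ha i j
      have hdetC : Polynomial.C M₀.det = (M₀.map Polynomial.C).det := by
        rw [← RingHom.mapMatrix_apply]
        exact RingHom.map_det _ _
      have hdet0 : IsUnit M₀.det := by
        rw [hM, ← hdetC, Polynomial.isUnit_C] at hdet
        exact hdet
      set N₀ : Matrix (Fin n) (Fin n) F := M₀⁻¹ with hN₀
      have hMN₀ : M₀ * N₀ = 1 := Matrix.mul_nonsing_inv _ hdet0
      set ψ : F →+* RatFunc F :=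
        (algebraMap (Polynomial F) (RatFunc F)).comp Polynomial.C with hψ
      have hψmem : ∀ b : F, ψ b ∈ valR F := by
        intro b
        show (algebraMap (Polynomial F) (RatFunc F) (Polynomial.C b)).intDegree ≤ 0
        rw [RatFunc.intDegree_polynomial, Polynomial.natDegree_C]
        simp
      have hMq : M.map (algebraMap (Polynomial F) (RatFunc F)) = M₀.map ψ := by
        rw [hM]
        ext i j
        simp [Matrix.map_apply, hψ]
      have hconstmem : ∀ (A : Matrix (Fin n) (Fin n) F) (x : Fin n → RatFunc F),
          (∀ i, (x i).intDegree ≤ 0) → ∀ i, (((A.map ψ).mulVec x) i).intDegree ≤ 0 := by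
        intro A x hx i
        have hv : (A.map ψ).mulVec x i = ∑ j, ψ (A i j) * x j := by
          simp [Matrix.mulVec, dotProduct, Matrix.map_apply]
        show ((A.map ψ).mulVec x i) ∈ valR F
        rw [hv]
        exact sum_mem fun j _ => mul_mem (hψmem (A i j)) (hx j)
      apply le_antisymm
      · rintro z hz
        obtain ⟨y, hy, rfl⟩ := Submodule.mem_map.mp hz
        have hval : (LinearMap.restrictScalars (valR F)
            ((M.map (algebraMap (Polynomial F) (RatFunc F))).mulVecLin)) y
            = (M₀.map ψ).mulVec y := by
          simp [hMq]
        rw [hval, hL₀, mem_L0_iff]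
        rw [hL₀] at hy
        exact hconstmem M₀ y ((mem_L0_iff y).mp hy)
      · intro x hx
        have hx' : ∀ i, (x i).intDegree ≤ 0 := by
          rw [hL₀] at hx
          exact (mem_L0_iff x).mp hx
        refine Submodule.mem_map.mpr ⟨(N₀.map ψ).mulVec x, ?_, ?_⟩
        · rw [hL₀, mem_L0_iff]
          exact hconstmem N₀ x hx'
        · show (LinearMap.restrictScalars (valR F)
              ((M.map (algebraMap (Polynomial F) (RatFunc F))).mulVecLin))
              ((N₀.map ψ).mulVec x) = x
          have hval : (LinearMap.restrictScalars (valR F)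
              ((M.map (algebraMap (Polynomial F) (RatFunc F))).mulVecLin))
              ((N₀.map ψ).mulVec x) = (M₀.map ψ).mulVec ((N₀.map ψ).mulVec x) := by
            simp [hMq]
          rw [hval, Matrix.mulVec_mulVec, ← Matrix.map_mul, hMN₀,
            Matrix.map_one _ (map_zero ψ) (map_one ψ), Matrix.one_mulVec]
  -- assemble
  refine ⟨part1, ?_, part3⟩
  apply part3 L₀
  · rw [hL₀]
    exact Submodule.fg_span (Set.finite_range _)
  · refine le_antisymm le_top ?_
    rw [← (Pi.basisFun (RatFunc F) (Fin n)).span_eq]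
    apply Submodule.span_mono
    rintro _ ⟨i, rfl⟩
    show (Pi.basisFun (RatFunc F) (Fin n)) i ∈ (L₀ : Set (Fin n → RatFunc F))
    have hbe : (Pi.basisFun (RatFunc F) (Fin n)) i = Pi.single i 1 := by
      simp [Pi.basisFun_apply]
    rw [hbe]
    exact hs0 i
end
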